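/- arXiv:1406.3842 — 2 statements merged into one kernel-verified Lean document; each statement's English description precedes it below -/
import Mathlib

section
/- (Aoki–Rolewicz) Let X be a vector space with a quasi-norm satisfying ‖x+y‖ ≤ C(‖x‖+‖y‖) with constant C ≥ 1. Let p ∈ (0,1] be defined by 2^{1/p} = 2C. Then there is an equivalent p-norm on X, i.e. a functional |||·||| with |||x+y|||^p ≤ |||x|||^p + |||y|||^p and (1/K)‖x‖ ≤ |||x||| ≤ K‖x‖ for some constant K. -/
private lemma exists_pow2 (t : ℝ) (ht : 1 ≤ t) :
    ∃ d : ℕ, t ≤ 2 ^ d ∧ ((2:ℝ) ^ d : ℝ) ≤ 4 * t := by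
  set n : ℕ := ⌈t⌉₊ with hn
  have hn0 : n ≠ 0 := by
    have : (1:ℕ) ≤ n := Nat.one_le_ceil_iff.mpr (by linarith)
    omega
  refine ⟨Nat.log 2 n + 1, ?_, ?_⟩
  · have h1 : (n : ℝ) < 2 ^ (Nat.log 2 n + 1) := by
      exact_mod_cast Nat.lt_pow_succ_log_self (by norm_num) n
    have h2 : t ≤ (n : ℝ) := Nat.le_ceil t
    linarith
  · have h1 : (2:ℕ) ^ (Nat.log 2 n) ≤ n := Nat.pow_log_le_self 2 hn0
    have h1' : ((2:ℝ)) ^ (Nat.log 2 n) ≤ (n:ℝ) := by exact_mod_cast h1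
    have h2 : (n : ℝ) < t + 1 := Nat.ceil_lt_add_one (by linarith)
    have : ((2:ℝ)) ^ (Nat.log 2 n + 1) = 2 * 2 ^ (Nat.log 2 n) := by ring
    rw [this]
    nlinarith

private lemma kraft_tail (s : Multiset ℕ) (hN : s.Nodup) (m : ℕ)
    (hm : ∀ d ∈ s, m + 1 ≤ d) :
    (s.map fun d => ((2:ℝ)^d)⁻¹).sum ≤ ((2:ℝ)^m)⁻¹ := by
  classical
  set t : Finset ℕ := ⟨s, hN⟩ with ht
  have hsum : (s.map fun d => ((2:ℝ)^d)⁻¹).sum = ∑ d ∈ t, ((2:ℝ)^d)⁻¹ := rfl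
  rw [hsum]
  have hsub : t ⊆ Finset.Ico (m+1) (t.sup id + 1) := by
    intro d hd
    have hds : d ∈ s := hd
    refine Finset.mem_Ico.mpr ⟨hm d hds, ?_⟩
    have : d ≤ t.sup id := Finset.le_sup (f := id) hd
    omega
  calc ∑ d ∈ t, ((2:ℝ)^d)⁻¹
      ≤ ∑ d ∈ Finset.Ico (m+1) (t.sup id + 1), ((2:ℝ)^d)⁻¹ :=
        Finset.sum_le_sum_of_subset_of_nonneg hsub (by intros; positivity)
    _ = ∑ d ∈ Finset.Ico (m+1) (t.sup id + 1), ((2:ℝ)⁻¹)^d := by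
        simp [inv_pow]
    _ ≤ ((2:ℝ)⁻¹)^(m+1) / (1 - 2⁻¹) := geom_sum_Ico_le_of_lt_one (by norm_num) (by norm_num)
    _ ≤ ((2:ℝ)^m)⁻¹ := by
        have h1 : ((2:ℝ)⁻¹)^(m+1) = ((2:ℝ)^m)⁻¹ * 2⁻¹ := by
          rw [pow_succ, inv_pow]
        rw [h1]
        have hp : (0:ℝ) < ((2:ℝ)^m)⁻¹ := by positivity
        rw [div_le_iff₀ (by norm_num)]
        nlinarith


private lemma lemA {X : Type*} [AddCommGroup X]
    (q : X → ℝ) (C : ℝ) (hC : 1 ≤ C)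
    (hq0 : ∀ x, 0 ≤ q x) (hq00 : q 0 = 0)
    (hqt : ∀ x y, q (x + y) ≤ C * (q x + q y)) :
    ∀ (n : ℕ) (M : Multiset (X × ℕ)), Multiset.card M = n →
      (M.map fun zd => ((2:ℝ) ^ zd.2)⁻¹).sum ≤ 1 →
      q (M.map Prod.fst).sum ≤ C * (M.map fun zd => C ^ zd.2 * q zd.1).sum := by
  have hC0 : (0:ℝ) < C := lt_of_lt_of_le one_pos hC
  intro n
  induction n using Nat.strong_induction_on with
  | _ n IH =>
  intro M hcard hkraft
  classical
  by_cases hnd : (M.map Prod.snd).Nodup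
  · -- nodup depths
    match n, hcard with
    | 0, hcard =>
      obtain rfl : M = 0 := Multiset.card_eq_zero.mp hcard
      simp [hq00]
    | 1, hcard =>
      obtain ⟨a, rfl⟩ := Multiset.card_eq_one.mp hcard
      have h1 : (1:ℝ) ≤ C ^ a.2 := one_le_pow₀ hC
      simp only [Multiset.map_singleton, Multiset.sum_singleton]
      have h2 : q a.1 ≤ C ^ a.2 * q a.1 := le_mul_of_one_le_left (hq0 _) h1
      have h3 : C ^ a.2 * q a.1 ≤ C * (C ^ a.2 * q a.1) :=
        le_mul_of_one_le_left (mul_nonneg (pow_nonneg hC0.le _) (hq0 _)) hC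
      linarith
    | (Nat.succ (Nat.succ m)), hcard =>
      -- extract minimal depth element
      have hTne : {d : ℕ | d ∈ M.map Prod.snd}.Nonempty := by
        have : M ≠ 0 := by
          intro h; rw [h] at hcard; simp at hcard
        obtain ⟨a, ha⟩ := Multiset.exists_mem_of_ne_zero this
        exact ⟨a.2, Multiset.mem_map_of_mem _ ha⟩
      have hd₀mem : sInf {d : ℕ | d ∈ M.map Prod.snd} ∈ M.map Prod.snd := Nat.sInf_mem hTne
      obtain ⟨⟨z₀, d₀⟩, hz₀M, hz₀⟩ := Multiset.mem_map.mp hd₀mem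
      simp only at hz₀
      obtain ⟨M₁, rfl⟩ := Multiset.exists_cons_of_mem hz₀M
      rw [Multiset.map_cons] at hnd
      have hd₀not : d₀ ∉ M₁.map Prod.snd := (Multiset.nodup_cons.mp hnd).1
      have hnd₁ : (M₁.map Prod.snd).Nodup := (Multiset.nodup_cons.mp hnd).2
      have hge : ∀ d ∈ M₁.map Prod.snd, d₀ + 1 ≤ d := by
        intro d hd
        have h1 : d₀ ≤ d := by
          rw [hz₀]
          exact Nat.sInf_le (by
            rw [Multiset.map_cons]; exact Multiset.mem_cons_of_mem hd)
        have h2 : d ≠ d₀ := fun h => hd₀not (h ▸ hd)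
        omega
      have hcard₁ : Multiset.card M₁ = m + 1 := by
        simp at hcard; omega
      have hM₁ne : M₁ ≠ 0 := by
        intro h; rw [h] at hcard₁; simp at hcard₁
      -- kraft sums
      rw [Multiset.map_cons, Multiset.sum_cons] at hkraft
      have hk₁nn : ∀ r ∈ M₁.map fun zd : X × ℕ => ((2:ℝ) ^ zd.2)⁻¹, 0 ≤ r := by
        intro r hr; obtain ⟨zd, _, rfl⟩ := Multiset.mem_map.mp hr; positivity
      have hd₀1 : 1 ≤ d₀ := by
        rcases Nat.eq_zero_or_pos d₀ with h0 | h; swap; · exact h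
        exfalso
        obtain ⟨b, hb⟩ := Multiset.exists_mem_of_ne_zero hM₁ne
        have hble : ((2:ℝ) ^ b.2)⁻¹ ≤ (M₁.map fun zd : X × ℕ => ((2:ℝ) ^ zd.2)⁻¹).sum :=
          Multiset.single_le_sum hk₁nn _ (Multiset.mem_map_of_mem _ hb)
        have hbpos : (0:ℝ) < ((2:ℝ) ^ b.2)⁻¹ := by positivity
        rw [h0] at hkraft
        simp at hkraft
        linarith
      -- kraft tail bound
      have ktail : (M₁.map fun zd : X × ℕ => ((2:ℝ) ^ zd.2)⁻¹).sum ≤ ((2:ℝ) ^ d₀)⁻¹ := by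
        have := kraft_tail (M₁.map Prod.snd) hnd₁ d₀ hge
        rwa [Multiset.map_map] at this
      -- shifted multiset
      set M₂ : Multiset (X × ℕ) := M₁.map fun zd => (zd.1, zd.2 - d₀) with hM₂
      have hcard₂ : Multiset.card M₂ = m + 1 := by
        rw [hM₂, Multiset.card_map]; exact hcard₁
      have kraft₂ : (M₂.map fun zd : X × ℕ => ((2:ℝ) ^ zd.2)⁻¹).sum ≤ 1 := by
        rw [hM₂, Multiset.map_map]
        have heq : (M₁.map fun zd : X × ℕ => ((2:ℝ) ^ (zd.2 - d₀))⁻¹).sum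
            = (M₁.map fun zd : X × ℕ => (2:ℝ) ^ d₀ * ((2:ℝ) ^ zd.2)⁻¹).sum := by
          apply congrArg
          apply Multiset.map_congr rfl
          intro zd hzd
          have hd : d₀ + 1 ≤ zd.2 := hge _ (Multiset.mem_map_of_mem _ hzd)
          have hpow : (2:ℝ) ^ zd.2 = 2 ^ (zd.2 - d₀) * 2 ^ d₀ := by
            rw [← pow_add]; congr 1; omega
          have h1 : ((2:ℝ) ^ (zd.2 - d₀)) ≠ 0 := by positivity
          have h2 : ((2:ℝ) ^ d₀) ≠ 0 := by positivity
          field_simp [hpow]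
          exact hpow
        calc (M₁.map fun zd : X × ℕ => ((2:ℝ) ^ ((fun zd : X × ℕ => (zd.1, zd.2 - d₀)) zd).2)⁻¹).sum
            = (M₁.map fun zd : X × ℕ => (2:ℝ) ^ d₀ * ((2:ℝ) ^ zd.2)⁻¹).sum := heq
          _ = (2:ℝ) ^ d₀ * (M₁.map fun zd : X × ℕ => ((2:ℝ) ^ zd.2)⁻¹).sum :=
              Multiset.sum_map_mul_left
          _ ≤ (2:ℝ) ^ d₀ * ((2:ℝ) ^ d₀)⁻¹ := by
              apply mul_le_mul_of_nonneg_left ktail (by positivity)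
          _ = 1 := by
              field_simp
      have hIH := IH (m+1) (by omega) M₂ hcard₂ kraft₂
      -- rewrite sums of M₂ in terms of M₁
      have hfst : (M₂.map Prod.fst).sum = (M₁.map Prod.fst).sum := by
        rw [hM₂, Multiset.map_map]; rfl
      have hrhs : (M₂.map fun zd : X × ℕ => C ^ zd.2 * q zd.1).sum
          = (M₁.map fun zd : X × ℕ => C ^ (zd.2 - d₀) * q zd.1).sum := by
        rw [hM₂, Multiset.map_map]; rfl
      rw [hfst, hrhs] at hIH
      -- combine
      have hshift : C * (M₁.map fun zd : X × ℕ => C ^ (zd.2 - d₀) * q zd.1).sum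
          ≤ (M₁.map fun zd : X × ℕ => C ^ zd.2 * q zd.1).sum := by
        rw [← Multiset.sum_map_mul_left]
        apply Multiset.sum_map_le_sum_map
        intro zd hzd
        have hd : d₀ + 1 ≤ zd.2 := hge _ (Multiset.mem_map_of_mem _ hzd)
        have h1 : C ^ (zd.2 - d₀ + 1) ≤ C ^ zd.2 :=
          pow_le_pow_right₀ hC (by omega)
        have h2 : C * (C ^ (zd.2 - d₀) * q zd.1) = C ^ (zd.2 - d₀ + 1) * q zd.1 := by ring
        rw [h2]
        exact mul_le_mul_of_nonneg_right h1 (hq0 _)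
      have hq1 : 0 ≤ q (M₁.map Prod.fst).sum := hq0 _
      have hone : (1:ℝ) ≤ C ^ d₀ := one_le_pow₀ hC
      simp only [Multiset.map_cons, Multiset.sum_cons]
      calc q (z₀ + (M₁.map Prod.fst).sum)
          ≤ C * (q z₀ + q (M₁.map Prod.fst).sum) := hqt _ _
        _ = C * q z₀ + C * q (M₁.map Prod.fst).sum := by ring
        _ ≤ C * (C ^ d₀ * q z₀) + C * (C * (M₁.map fun zd : X × ℕ => C ^ (zd.2 - d₀) * q zd.1).sum) := by
            have e1 : C * q z₀ ≤ C * (C ^ d₀ * q z₀) := by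
              apply mul_le_mul_of_nonneg_left _ hC0.le
              nlinarith [hq0 z₀]
            have e2 : C * q (M₁.map Prod.fst).sum
                ≤ C * (C * (M₁.map fun zd : X × ℕ => C ^ (zd.2 - d₀) * q zd.1).sum) := by
              apply mul_le_mul_of_nonneg_left hIH hC0.le
            linarith
        _ ≤ C * (C ^ d₀ * q z₀) + C * (M₁.map fun zd : X × ℕ => C ^ zd.2 * q zd.1).sum := by
            have := mul_le_mul_of_nonneg_left hshift hC0.le
            linarith
        _ = C * (C ^ d₀ * q z₀ + (M₁.map fun zd : X × ℕ => C ^ zd.2 * q zd.1).sum) := by ring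
  · -- duplicate depths
    rw [Multiset.nodup_iff_count_le_one] at hnd
    push_neg at hnd
    obtain ⟨d, hd⟩ := hnd
    have hdmem : d ∈ M.map Prod.snd := Multiset.count_pos.mp (by omega)
    obtain ⟨⟨z₁, d₁⟩, hz₁M, hz₁⟩ := Multiset.mem_map.mp hdmem
    simp only at hz₁
    subst hz₁
    obtain ⟨M₁, rfl⟩ := Multiset.exists_cons_of_mem hz₁M
    have hcnt : 0 < Multiset.count d₁ (M₁.map Prod.snd) := by
      rw [Multiset.map_cons, Multiset.count_cons_self] at hd
      omega
    have hdmem₁ : d₁ ∈ M₁.map Prod.snd := Multiset.count_pos.mp hcnt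
    obtain ⟨⟨z₂, d₂⟩, hz₂M, hz₂⟩ := Multiset.mem_map.mp hdmem₁
    simp only at hz₂
    subst hz₂
    obtain ⟨M₂, rfl⟩ := Multiset.exists_cons_of_mem hz₂M
    -- now M = (z₁,d₁) ::ₘ (z₂,d₁) ::ₘ M₂
    simp only [Multiset.map_cons, Multiset.sum_cons] at hkraft ⊢
    have hrest0 : (0:ℝ) ≤ (M₂.map fun zd : X × ℕ => ((2:ℝ) ^ zd.2)⁻¹).sum := by
      apply Multiset.sum_nonneg
      intro r hr; obtain ⟨zd, _, rfl⟩ := Multiset.mem_map.mp hr; positivity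
    have hd1 : 1 ≤ d₂ := by
      rcases Nat.eq_zero_or_pos d₂ with h0 | h; swap; · exact h
      exfalso
      rw [h0] at hkraft
      simp at hkraft
      linarith
    obtain ⟨d', rfl⟩ : ∃ d', d₂ = d' + 1 := ⟨d₂ - 1, by omega⟩
    have hcard₂ : Multiset.card M₂ + 2 = n := by simpa using hcard
    set M' : Multiset (X × ℕ) := (z₁ + z₂, d') ::ₘ M₂ with hM'
    have hcard' : Multiset.card M' = n - 1 := by
      rw [hM', Multiset.card_cons]; omega
    have hkraft' : (M'.map fun zd : X × ℕ => ((2:ℝ) ^ zd.2)⁻¹).sum ≤ 1 := by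
      rw [hM', Multiset.map_cons, Multiset.sum_cons]
      have hsplit : ((2:ℝ) ^ d')⁻¹ = ((2:ℝ) ^ (d'+1))⁻¹ + ((2:ℝ) ^ (d'+1))⁻¹ := by
        have h2 : ((2:ℝ) ^ d') ≠ 0 := by positivity
        rw [pow_succ]
        field_simp
        ring
      rw [hsplit]
      linarith
    have hIH := IH (n-1) (by omega) M' hcard' hkraft'
    rw [hM', Multiset.map_cons, Multiset.sum_cons, Multiset.map_cons, Multiset.sum_cons] at hIH
    have hsum : z₁ + (z₂ + (M₂.map Prod.fst).sum) = z₁ + z₂ + (M₂.map Prod.fst).sum := by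
      rw [add_assoc]
    rw [hsum]
    refine le_trans hIH ?_
    apply mul_le_mul_of_nonneg_left _ hC0.le
    have h1 : C ^ d' * q (z₁ + z₂) ≤ C ^ d' * (C * (q z₁ + q z₂)) :=
      mul_le_mul_of_nonneg_left (hqt _ _) (pow_nonneg hC0.le _)
    have h2 : C ^ d' * (C * (q z₁ + q z₂)) = C ^ (d'+1) * q z₁ + C ^ (d'+1) * q z₂ := by
      ring
    linarith


/-- Aoki–Rolewicz theorem: a quasi-norm with constant `C ≥ 1` is equivalent to a
`p`-norm, where `2 ^ (1/p) = 2 * C`. -/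
theorem aoki_rolewicz {X : Type*} [AddCommGroup X] [Module ℝ X]
    (q : X → ℝ) (C : ℝ) (hC : 1 ≤ C)
    (hq0 : ∀ x, 0 ≤ q x)
    (hqz : ∀ x, q x = 0 ↔ x = 0)
    (hqh : ∀ (a : ℝ) (x : X), q (a • x) = |a| * q x)
    (hqt : ∀ x y, q (x + y) ≤ C * (q x + q y))
    (p : ℝ) (hp0 : 0 < p) (hp1 : p ≤ 1)
    (hpC : (2 : ℝ) ^ (1 / p) = 2 * C) :
    ∃ (N : X → ℝ) (K : ℝ), 0 < K ∧
      (∀ x y, N (x + y) ^ p ≤ N x ^ p + N y ^ p) ∧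
      (∀ x, (1 / K) * q x ≤ N x ∧ N x ≤ K * q x) := by
  classical
  have hC0 : (0:ℝ) < C := lt_of_lt_of_le one_pos hC
  have hp : p ≠ 0 := ne_of_gt hp0
  have hq00 : q (0:X) = 0 := (hqz 0).mpr rfl
  set e : ℝ := 1/p - 1 with he
  have he0 : 0 ≤ e := by
    rw [he]
    have h1 : 1 ≤ 1/p := by
      rw [le_div_iff₀ hp0]; linarith
    linarith
  have hCe : C = (2:ℝ) ^ e := by
    rw [he, Real.rpow_sub (by norm_num : (0:ℝ) < 2), hpC, Real.rpow_one]
    field_simp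
  set K₀ : ℝ := C * (4:ℝ) ^ e with hK₀
  have h4e : (1:ℝ) ≤ (4:ℝ) ^ e := by
    have h := Real.rpow_le_rpow_of_exponent_le (by norm_num : (1:ℝ) ≤ 4) he0
    rw [Real.rpow_zero] at h
    exact h
  have hK₀1 : 1 ≤ K₀ := by nlinarith
  have hK₀0 : (0:ℝ) < K₀ := lt_of_lt_of_le one_pos hK₀1
  -- the p-power sum functional on lists
  set F : List X → ℝ := fun l => (l.map fun z => q z ^ p).sum with hF
  have hFnn : ∀ l, 0 ≤ F l := by
    intro l
    apply List.sum_nonneg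
    intro r hr
    obtain ⟨z, _, rfl⟩ := List.mem_map.mp hr
    exact Real.rpow_nonneg (hq0 z) p
  have hqt' : ∀ x y : X, q (x + y) ≤ C * q x + C * q y := by
    intro x y
    have := hqt x y
    linarith [hqt x y, mul_add C (q x) (q y)]
  -- identity : (q z ^ p) ^ (1/p) = q z
  have hid : ∀ r : ℝ, 0 ≤ r → (r ^ p) ^ (1/p) = r := by
    intro r hr
    rw [← Real.rpow_mul hr, mul_one_div, div_self hp, Real.rpow_one]
  have hid' : ∀ r : ℝ, 0 ≤ r → (r ^ (1/p)) ^ p = r := by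
    intro r hr
    rw [← Real.rpow_mul hr, one_div, inv_mul_cancel₀ hp, Real.rpow_one]
  -- Key lemma
  have KL : ∀ l : List X, q l.sum ≤ K₀ * (F l) ^ (1/p) := by
    intro l
    set l' : List X := l.filter (fun z => q z ≠ 0) with hl'
    have hfil : ∀ L : List X, ((L.filter (fun z => q z ≠ 0)).sum = L.sum) ∧
        (F (L.filter (fun z => q z ≠ 0)) = F L) := by
      intro L
      induction L with
      | nil => simp
      | cons a t ih =>
        obtain ⟨ih1, ih2⟩ := ih
        by_cases ha : q a = 0
        · have ha0 : a = 0 := (hqz a).mp ha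
          subst ha0
          constructor
          · simpa [List.filter_cons, hq00] using ih1
          · simp only [hF] at ih2 ⊢
            simpa [List.filter_cons, hq00, Real.zero_rpow hp] using ih2
        · constructor
          · simp only [List.filter_cons, ha]
            simpa [ha] using ih1
          · simp only [hF] at ih2 ⊢
            simp only [List.filter_cons, ha]
            simpa [ha] using ih2
    have hsum' : l'.sum = l.sum := (hfil l).1
    have hFeq : F l' = F l := (hfil l).2
    by_cases hl'0 : l' = []
    · have : l.sum = 0 := by rw [← hsum', hl'0]; simp
      rw [this, hq00]
      exact mul_nonneg hK₀0.le (Real.rpow_nonneg (hFnn l) _)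
    · -- positive part
      have hmem : ∀ z ∈ l', 0 < q z := by
        intro z hz
        have h1 : q z ≠ 0 := by
          have := List.of_mem_filter hz
          simpa using this
        exact lt_of_le_of_ne (hq0 z) (Ne.symm h1)
      set S : ℝ := F l' with hS
      have hSel : ∀ z ∈ l', 0 < q z ^ p ∧ q z ^ p ≤ S := by
        intro z hz
        constructor
        · exact Real.rpow_pos_of_pos (hmem z hz) p
        · apply List.single_le_sum
          · intro r hr
            obtain ⟨w, _, rfl⟩ := List.mem_map.mp hr
            exact Real.rpow_nonneg (hq0 w) p
          · exact List.mem_map_of_mem hz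
      have hS0 : 0 < S := by
        obtain ⟨z, hz⟩ := List.exists_mem_of_ne_nil l' hl'0
        exact lt_of_lt_of_le (hSel z hz).1 (hSel z hz).2
      have hex : ∀ z ∈ l', ∃ d : ℕ, S / q z ^ p ≤ 2 ^ d ∧ ((2:ℝ) ^ d) ≤ 4 * (S / q z ^ p) := by
        intro z hz
        apply exists_pow2
        rw [le_div_iff₀ (hSel z hz).1]
        simpa using (hSel z hz).2
      choose! D hD1 hD2 using hex
      set M : Multiset (X × ℕ) := (↑l' : Multiset X).map (fun z => (z, D z)) with hM
      have hkraft : (M.map fun zd : X × ℕ => ((2:ℝ) ^ zd.2)⁻¹).sum ≤ 1 := by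
        rw [hM, Multiset.map_map]
        have hle : ((↑l' : Multiset X).map fun z => ((2:ℝ) ^ (D z))⁻¹).sum
            ≤ ((↑l' : Multiset X).map fun z => q z ^ p * S⁻¹).sum := by
          apply Multiset.sum_map_le_sum_map
          intro z hz
          have hz' : z ∈ l' := by simpa using hz
          have h1 : (0:ℝ) < S / q z ^ p := div_pos hS0 (hSel z hz').1
          have h2 : ((2:ℝ) ^ (D z))⁻¹ ≤ (S / q z ^ p)⁻¹ := by
            apply inv_anti₀ h1 (hD1 z hz')
          rw [inv_div] at h2
          rw [div_eq_mul_inv] at h2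
          exact h2
        refine le_trans hle ?_
        rw [Multiset.sum_map_mul_right]
        have : ((↑l' : Multiset X).map fun z => q z ^ p).sum = S := by
          rw [hS, hF]
          simp
        rw [this, mul_inv_cancel₀ (ne_of_gt hS0)]
      have hlemA := lemA q C hC hq0 hq00 hqt (Multiset.card M) M rfl hkraft
      have hfst : (M.map Prod.fst).sum = l.sum := by
        rw [hM, Multiset.map_map, ← hsum']
        have hcomp : (Prod.fst ∘ fun z : X => (z, D z)) = id := rfl
        rw [hcomp, Multiset.map_id]
        simp
      rw [hfst] at hlemA
      -- bound the RHS of lemA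
      have hbound : (M.map fun zd : X × ℕ => C ^ zd.2 * q zd.1).sum
          ≤ ((4:ℝ) ^ e * S ^ e) * S := by
        rw [hM, Multiset.map_map]
        have hle : ((↑l' : Multiset X).map fun z => C ^ (D z) * q z).sum
            ≤ ((↑l' : Multiset X).map fun z => ((4:ℝ) ^ e * S ^ e) * (q z ^ p)).sum := by
          apply Multiset.sum_map_le_sum_map
          intro z hz
          have hz' : z ∈ l' := by simpa using hz
          have hh : 0 < q z ^ p := (hSel z hz').1
          have hCD : (C : ℝ) ^ (D z) = ((2:ℝ) ^ (D z) : ℝ) ^ e := by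
            rw [hCe, ← Real.rpow_natCast ((2:ℝ) ^ e) (D z), ← Real.rpow_mul (by norm_num : (0:ℝ) ≤ 2),
              ← Real.rpow_natCast (2:ℝ) (D z), ← Real.rpow_mul (by norm_num : (0:ℝ) ≤ 2), mul_comm]
          have h1 : ((2:ℝ) ^ (D z) : ℝ) ^ e ≤ (4 * (S / q z ^ p)) ^ e :=
            Real.rpow_le_rpow (by positivity) (hD2 z hz') he0
          have h2 : C ^ (D z) * q z ≤ (4 * (S / q z ^ p)) ^ e * q z := by
            rw [hCD]
            exact mul_le_mul_of_nonneg_right h1 (hq0 z)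
          refine le_trans h2 (le_of_eq ?_)
          set w : ℝ := q z ^ p with hw
          have hqe : w ^ e * w = q z := by
            rw [← Real.rpow_add_one (ne_of_gt hh)]
            have he1 : e + 1 = 1/p := by rw [he]; ring
            rw [he1, hw]
            exact hid (q z) (hq0 z)
          rw [Real.mul_rpow (by norm_num) (le_of_lt (div_pos hS0 hh)),
            Real.div_rpow hS0.le hh.le]
          rw [← hqe]
          have hne : w ^ e ≠ 0 := by
            have : (0:ℝ) < w ^ e := Real.rpow_pos_of_pos hh e
            exact ne_of_gt this
          field_simp
        refine le_trans hle (le_of_eq ?_)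
        rw [Multiset.sum_map_mul_left]
        have : ((↑l' : Multiset X).map fun z => q z ^ p).sum = S := by
          rw [hS, hF]; simp
        rw [this]
      have hSpow : S ^ e * S = S ^ (1/p : ℝ) := by
        rw [← Real.rpow_add_one (ne_of_gt hS0)]
        congr 1
        rw [he]; ring
      calc q l.sum ≤ C * (M.map fun zd : X × ℕ => C ^ zd.2 * q zd.1).sum := hlemA
        _ ≤ C * (((4:ℝ) ^ e * S ^ e) * S) := mul_le_mul_of_nonneg_left hbound hC0.le
        _ = K₀ * (S ^ e * S) := by rw [hK₀]; ring
        _ = K₀ * S ^ (1/p : ℝ) := by rw [hSpow]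
        _ = K₀ * (F l) ^ (1/p : ℝ) := by rw [hFeq]
  -- p-power form
  set B : ℝ := K₀ ^ (p : ℝ) with hB
  have hB0 : 0 < B := Real.rpow_pos_of_pos hK₀0 p
  have hBroot : B ^ (1/p : ℝ) = K₀ := hid K₀ hK₀0.le
  have KLp : ∀ l : List X, q l.sum ^ p ≤ B * F l := by
    intro l
    have h1 : q l.sum ^ p ≤ (K₀ * (F l) ^ (1/p : ℝ)) ^ p :=
      Real.rpow_le_rpow (hq0 _) (KL l) hp0.le
    refine le_trans h1 (le_of_eq ?_)
    rw [Real.mul_rpow hK₀0.le (Real.rpow_nonneg (hFnn l) _), hid' (F l) (hFnn l)]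
  -- infimum construction
  set A : X → Set ℝ := fun x => {r : ℝ | ∃ l : List X, l.sum = x ∧ F l = r} with hA
  have hAne : ∀ x, (A x).Nonempty := fun x => ⟨F [x], [x], by simp, rfl⟩
  have hAnn : ∀ x, ∀ r ∈ A x, (0:ℝ) ≤ r := by
    rintro x r ⟨l, _, rfl⟩
    exact hFnn l
  have hbdd : ∀ x, BddBelow (A x) := fun x => ⟨0, fun r hr => hAnn x r hr⟩
  set Np : X → ℝ := fun x => sInf (A x) with hNp
  have hNp0 : ∀ x, 0 ≤ Np x := fun x => le_csInf (hAne x) (fun r hr => hAnn x r hr)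
  have hFx : ∀ x : X, F [x] = q x ^ p := by
    intro x
    rw [hF]
    simp
  have hNple : ∀ x, Np x ≤ q x ^ p := by
    intro x
    have : q x ^ p ∈ A x := ⟨[x], by simp, hFx x⟩
    exact csInf_le (hbdd x) this
  have hNpge : ∀ x, q x ^ p ≤ B * Np x := by
    intro x
    have h1 : ∀ r ∈ A x, q x ^ p / B ≤ r := by
      rintro r ⟨l, hls, rfl⟩
      rw [div_le_iff₀ hB0]
      have := KLp l
      rw [hls] at this
      linarith [this]
    have h2 : q x ^ p / B ≤ Np x := le_csInf (hAne x) h1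
    rw [div_le_iff₀ hB0] at h2
    linarith [h2]
  have subadd : ∀ x y, Np (x + y) ≤ Np x + Np y := by
    intro x y
    have key : ∀ a ∈ A x, ∀ b ∈ A y, Np (x + y) ≤ a + b := by
      rintro a ⟨la, hla, rfl⟩ b ⟨lb, hlb, rfl⟩
      apply csInf_le (hbdd _)
      refine ⟨la ++ lb, by simp [hla, hlb], ?_⟩
      rw [hF]
      simp
    have h2 : ∀ b ∈ A y, Np (x + y) - b ≤ Np x := by
      intro b hb
      apply le_csInf (hAne x)
      intro a ha
      have := key a ha b hb
      linarith
    have h3 : Np (x + y) - Np x ≤ Np y := by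
      apply le_csInf (hAne y)
      intro b hb
      have := h2 b hb
      linarith
    linarith
  -- final assembly
  refine ⟨fun x => Np x ^ (1/p : ℝ), K₀, hK₀0, ?_, ?_⟩
  · intro x y
    rw [hid' _ (hNp0 (x+y)), hid' _ (hNp0 x), hid' _ (hNp0 y)]
    exact subadd x y
  · intro x
    constructor
    · have h1 : q x ≤ K₀ * Np x ^ (1/p : ℝ) := by
        have h2 : (q x ^ p) ^ (1/p : ℝ) ≤ (B * Np x) ^ (1/p : ℝ) :=
          Real.rpow_le_rpow (Real.rpow_nonneg (hq0 x) p) (hNpge x) (by positivity)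
        rw [hid (q x) (hq0 x)] at h2
        rw [Real.mul_rpow hB0.le (hNp0 x), hBroot] at h2
        exact h2
      rw [div_mul_eq_mul_div, div_le_iff₀ hK₀0, one_mul]
      calc q x ≤ K₀ * Np x ^ (1/p : ℝ) := h1
        _ = Np x ^ (1/p : ℝ) * K₀ := by ring
    · have h2 : Np x ^ (1/p : ℝ) ≤ (q x ^ p) ^ (1/p : ℝ) :=
        Real.rpow_le_rpow (hNp0 x) (hNple x) (by positivity)
      rw [hid (q x) (hq0 x)] at h2
      exact le_trans h2 (le_mul_of_one_le_left (hq0 x) hK₀1)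
end

section
/- For the couple (L¹, L^∞) on a σ-finite measure space, the K-functional satisfies K(t, f; L¹, L^∞) = ∫₀^t f*(s) ds, where f* is the decreasing rearrangement of |f|. -/
open MeasureTheory Set
open scoped ENNReal

/-- The decreasing rearrangement `f*(s) = inf {λ : μ{|f| > λ} ≤ s}`. -/
noncomputable def decRearr {α : Type*} [MeasurableSpace α] (μ : Measure α)
    (f : α → ℝ) (s : ℝ) : ℝ≥0∞ :=
  sInf {l : ℝ≥0∞ | μ {x | l < (‖f x‖₊ : ℝ≥0∞)} ≤ ENNReal.ofReal s}


lemma vol_ofReal_lt (a : ℝ≥0∞) :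
    volume {s : ℝ | 0 < s ∧ ENNReal.ofReal s < a} = a := by
  rcases eq_or_ne a ∞ with ha | ha
  · have : {s : ℝ | 0 < s ∧ ENNReal.ofReal s < a} = Ioi 0 := by
      ext s; simp [ha, ENNReal.ofReal_lt_top]
    rw [this, Real.volume_Ioi, ha]
  · have : {s : ℝ | 0 < s ∧ ENNReal.ofReal s < a} = Ioo 0 a.toReal := by
      ext s
      simp only [mem_setOf_eq, mem_Ioo, and_congr_right_iff]
      intro hs
      rw [ENNReal.ofReal_lt_iff_lt_toReal hs.le ha]
    rw [this, Real.volume_Ioo, sub_zero, ENNReal.ofReal_toReal ha]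

/-- Layer cake formula for `ℝ≥0∞`-valued functions. -/
lemma layercake {β : Type*} [MeasurableSpace β] (ν : Measure β) [SigmaFinite ν]
    {G : β → ℝ≥0∞} (hG : Measurable G) :
    ∫⁻ x, G x ∂ν = ∫⁻ c in Ioi (0:ℝ), ν {x | ENNReal.ofReal c < G x} := by
  set K : β → ℝ → ℝ≥0∞ := fun x c =>
    Set.indicator {c : ℝ | ENNReal.ofReal c < G x} (fun _ => (1:ℝ≥0∞)) c with hK
  have hAmeas : MeasurableSet {p : β × ℝ | ENNReal.ofReal p.2 < G p.1} := by
    have : {p : β × ℝ | ENNReal.ofReal p.2 < G p.1} =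
        (fun p : β × ℝ => (ENNReal.ofReal p.2, G p.1)) ⁻¹' {q : ℝ≥0∞ × ℝ≥0∞ | q.1 < q.2} := rfl
    rw [this]
    exact (measurableSet_lt measurable_fst measurable_snd).preimage
      ((ENNReal.measurable_ofReal.comp measurable_snd).prodMk (hG.comp measurable_fst))
  have hF : Measurable (Function.uncurry K) := by
    have : Function.uncurry K = fun p : β × ℝ =>
        Set.indicator {p : β × ℝ | ENNReal.ofReal p.2 < G p.1} (fun _ => (1:ℝ≥0∞)) p := by
      funext p; simp [Function.uncurry, hK, Set.indicator_apply, mem_setOf_eq]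
    rw [this]
    exact measurable_const.indicator hAmeas
  calc ∫⁻ x, G x ∂ν
      = ∫⁻ x, (∫⁻ c in Ioi (0:ℝ), K x c) ∂ν := by
        refine lintegral_congr fun x => ?_
        have hmeas : MeasurableSet {c : ℝ | ENNReal.ofReal c < G x} :=
          ENNReal.measurable_ofReal (measurableSet_Iio (a := G x))
        rw [hK]
        rw [lintegral_indicator hmeas, setLIntegral_one, Measure.restrict_apply hmeas]
        have : {c : ℝ | ENNReal.ofReal c < G x} ∩ Ioi 0
            = {s : ℝ | 0 < s ∧ ENNReal.ofReal s < G x} := by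
          ext s; simp only [mem_inter_iff, mem_setOf_eq, mem_Ioi]; exact and_comm
        rw [this, vol_ofReal_lt]
    _ = ∫⁻ c in Ioi (0:ℝ), (∫⁻ x, K x c ∂ν) := lintegral_lintegral_swap hF.aemeasurable
    _ = ∫⁻ c in Ioi (0:ℝ), ν {x | ENNReal.ofReal c < G x} := by
        refine lintegral_congr fun c => ?_
        have hmeas : MeasurableSet {x : β | ENNReal.ofReal c < G x} :=
          hG (measurableSet_Ioi (a := ENNReal.ofReal c))
        have : ∀ x : β, K x c
            = Set.indicator {x : β | ENNReal.ofReal c < G x} (fun _ => (1:ℝ≥0∞)) x := by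
          intro x; simp only [hK, Set.indicator_apply, mem_setOf_eq]
        simp_rw [this]
        rw [lintegral_indicator hmeas, setLIntegral_one]



section DecRearr
variable {α : Type*} [MeasurableSpace α] (μ : Measure α) (f : α → ℝ)

lemma decRearr_le_iff {s : ℝ} {c : ℝ≥0∞} :
    decRearr μ f s ≤ c ↔ μ {x | c < (‖f x‖₊ : ℝ≥0∞)} ≤ ENNReal.ofReal s := by
  constructor
  · intro hle
    rcases eq_or_ne c ∞ with hc | hc
    · have : {x | c < (‖f x‖₊ : ℝ≥0∞)} = ∅ := by
        ext x; simp [hc]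
      simp [this]
    · have hunion : {x | c < (‖f x‖₊ : ℝ≥0∞)}
          = ⋃ n : ℕ, {x | c + ((n : ℝ≥0∞) + 1)⁻¹ < (‖f x‖₊ : ℝ≥0∞)} := by
        ext x
        simp only [mem_setOf_eq, mem_iUnion]
        constructor
        · intro hx
          have hfin : (‖f x‖₊ : ℝ≥0∞) ≠ ∞ := ENNReal.coe_ne_top
          have hpos : (0:ℝ≥0∞) < (‖f x‖₊ : ℝ≥0∞) - c := tsub_pos_iff_lt.mpr hx
          obtain ⟨n, hn⟩ := ENNReal.exists_inv_nat_lt hpos.ne'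
          refine ⟨n, ?_⟩
          have h1 : ((n : ℝ≥0∞) + 1)⁻¹ ≤ (n : ℝ≥0∞)⁻¹ :=
            ENNReal.inv_le_inv.mpr (le_add_of_nonneg_right zero_le_one)
          have h2 : c + ((n : ℝ≥0∞) + 1)⁻¹ < c + ((‖f x‖₊ : ℝ≥0∞) - c) :=
            ENNReal.add_lt_add_left hc (lt_of_le_of_lt h1 hn)
          rwa [add_tsub_cancel_of_le hx.le] at h2
        · rintro ⟨n, hn⟩
          exact lt_of_le_of_lt (le_add_of_nonneg_right zero_le) hn
      have hmono : Monotone fun n : ℕ => {x : α | c + ((n : ℝ≥0∞) + 1)⁻¹ < (‖f x‖₊ : ℝ≥0∞)} := by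
        intro n m hnm
        have hinv : ((m : ℝ≥0∞) + 1)⁻¹ ≤ ((n : ℝ≥0∞) + 1)⁻¹ :=
          ENNReal.inv_le_inv.mpr (by gcongr <;> exact_mod_cast hnm)
        intro x hx
        exact lt_of_le_of_lt (add_le_add le_rfl hinv) hx
      rw [hunion, hmono.directed_le.measure_iUnion]
      refine iSup_le fun n => ?_
      have hlt : decRearr μ f s < c + ((n : ℝ≥0∞) + 1)⁻¹ :=
        lt_of_le_of_lt hle (ENNReal.lt_add_right hc (by simp))
      obtain ⟨l, hlS, hl⟩ := sInf_lt_iff.mp hlt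
      refine le_trans (measure_mono fun x hx => ?_) hlS
      exact lt_of_le_of_lt hl.le hx
  · intro hmem
    exact sInf_le hmem

lemma lt_decRearr_iff {s : ℝ} {c : ℝ≥0∞} :
    c < decRearr μ f s ↔ ENNReal.ofReal s < μ {x | c < (‖f x‖₊ : ℝ≥0∞)} := by
  rw [← not_le, ← not_le, decRearr_le_iff]

lemma decRearr_anti {s s' : ℝ} (h : s ≤ s') : decRearr μ f s' ≤ decRearr μ f s :=
  sInf_le_sInf fun l hl => le_trans hl (ENNReal.ofReal_le_ofReal h)

end DecRearr



section L3
variable {α : Type*} [MeasurableSpace α] (μ : Measure α) (f : α → ℝ)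

lemma vol_decRearr_inter {t : ℝ} (ht : 0 < t) (c : ℝ≥0∞) :
    volume ({s : ℝ | c < decRearr μ f s} ∩ Ioc 0 t)
      = min (μ {x | c < (‖f x‖₊ : ℝ≥0∞)}) (ENNReal.ofReal t) := by
  set D := μ {x | c < (‖f x‖₊ : ℝ≥0∞)} with hD
  have hiff : ∀ s : ℝ, c < decRearr μ f s ↔ ENNReal.ofReal s < D := fun s =>
    lt_decRearr_iff μ f
  rcases eq_or_ne D ∞ with hDi | hDi
  · have hset : {s : ℝ | c < decRearr μ f s} ∩ Ioc 0 t = Ioc 0 t := by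
      apply inter_eq_right.mpr
      intro s _
      rw [mem_setOf_eq, hiff s, hDi]
      exact ENNReal.ofReal_lt_top
    rw [hset, Real.volume_Ioc, sub_zero, hDi, min_eq_right le_top]
  · set r := D.toReal with hr
    have hDr : D = ENNReal.ofReal r := (ENNReal.ofReal_toReal hDi).symm
    have hiff' : ∀ s : ℝ, 0 < s → (c < decRearr μ f s ↔ s < r) := by
      intro s hs
      rw [hiff s, ENNReal.ofReal_lt_iff_lt_toReal hs.le hDi]
    rcases le_or_gt r t with hrt | hrt
    · have hset : {s : ℝ | c < decRearr μ f s} ∩ Ioc 0 t = Ioo 0 r := by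
        ext s
        simp only [mem_inter_iff, mem_setOf_eq, mem_Ioc, mem_Ioo]
        constructor
        · rintro ⟨h1, h2, h3⟩
          exact ⟨h2, (hiff' s h2).mp h1⟩
        · rintro ⟨h1, h2⟩
          exact ⟨(hiff' s h1).mpr h2, h1, le_trans h2.le hrt⟩
      rw [hset, Real.volume_Ioo, sub_zero, ← hDr,
        min_eq_left (hDr ▸ ENNReal.ofReal_le_ofReal hrt)]
    · have hset : {s : ℝ | c < decRearr μ f s} ∩ Ioc 0 t = Ioc 0 t := by
        apply inter_eq_right.mpr
        rintro s ⟨h1, h2⟩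
        exact (hiff' s h1).mpr (lt_of_le_of_lt h2 hrt)
      rw [hset, Real.volume_Ioc, sub_zero,
        min_eq_right (hDr ▸ ENNReal.ofReal_le_ofReal hrt.le)]
end L3


lemma lintegral_shift (φ : ℝ → ℝ≥0∞) (m : ℝ) :
    ∫⁻ c in Ioi m, φ c = ∫⁻ c in Ioi (0:ℝ), φ (c + m) := by
  have h := (measurePreserving_add_right (volume : Measure ℝ) m).setLIntegral_comp_emb
    (Homeomorph.addRight m).measurableEmbedding φ (Ioi 0)
  have himg : (fun x : ℝ => x + m) '' Ioi 0 = Ioi m := by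
    rw [image_add_const_Ioi, zero_add]
  rw [← himg]
  exact h.symm

/-- For the couple `(L¹, L∞)` the K-functional is
`K(t, f) = ∫₀ᵗ f*(s) ds`. -/
theorem K_functional_L1_Linfty {α : Type*} [MeasurableSpace α]
    (μ : Measure α) [SigmaFinite μ] (f : α → ℝ) (hf : Measurable f)
    (t : ℝ) (ht : 0 < t) :
    (⨅ (g : α → ℝ) (h : α → ℝ) (_ : Measurable g) (_ : Measurable h)
        (_ : f = g + h), eLpNorm g 1 μ + ENNReal.ofReal t * eLpNorm h ⊤ μ) =
      ∫⁻ s in Set.Ioc (0:ℝ) t, decRearr μ f s := by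
  classical
  set T := ENNReal.ofReal t with hT
  have hT0 : T ≠ 0 := by
    simp only [hT, ne_eq, ENNReal.ofReal_eq_zero, not_le]; exact ht
  set F : α → ℝ≥0∞ := fun x => (‖f x‖₊ : ℝ≥0∞) with hFdef
  have hFmeas : Measurable F := hf.nnnorm.coe_nnreal_ennreal
  set D : ℝ≥0∞ → ℝ≥0∞ := fun c => μ {x | c < F x} with hDdef
  have hDanti : Antitone D := fun c c' h => measure_mono fun x hx => lt_of_le_of_lt h hx
  have hdecanti : Antitone (decRearr μ f) := fun s s' h => decRearr_anti μ f h
  have hdecmeas : Measurable (decRearr μ f) := hdecanti.measurable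
  have hI : ∫⁻ s in Set.Ioc (0:ℝ) t, decRearr μ f s
      = ∫⁻ c in Ioi (0:ℝ), min (D (ENNReal.ofReal c)) T := by
    rw [layercake (volume.restrict (Ioc 0 t)) hdecmeas]
    refine lintegral_congr fun c => ?_
    rw [Measure.restrict_apply (measurableSet_lt measurable_const hdecmeas), vol_decRearr_inter μ f ht]
  rw [hI]
  apply le_antisymm
  · -- K(t,f) ≤ ∫
    by_cases hl : decRearr μ f t = ∞
    · have hall : ∀ c ∈ Ioi (0:ℝ), min (D (ENNReal.ofReal c)) T = T := by
        intro c _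
        refine min_eq_right (le_of_lt ?_)
        exact (lt_decRearr_iff μ f).mp (by rw [hl]; exact ENNReal.ofReal_lt_top)
      have : ∫⁻ c in Ioi (0:ℝ), min (D (ENNReal.ofReal c)) T = ∞ := by
        rw [setLIntegral_congr_fun measurableSet_Ioi hall,
          setLIntegral_const, Real.volume_Ioi, ENNReal.mul_top hT0]
      rw [this]; exact le_top
    · set lam := decRearr μ f t with hlam
      set r := lam.toReal with hr
      have hr0 : 0 ≤ r := ENNReal.toReal_nonneg
      have hlamr : lam = ENNReal.ofReal r := (ENNReal.ofReal_toReal hl).symm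
      set h : α → ℝ := fun x => max (-r) (min r (f x)) with hh
      set g : α → ℝ := fun x => f x - h x with hgdef
      have hhmeas : Measurable h := (measurable_const.max (measurable_const.min hf))
      have hgmeas : Measurable g := hf.sub hhmeas
      have hfgh : f = g + h := by
        funext x; simp only [hgdef, hh, Pi.add_apply]; ring
      have hgabs : ∀ x, (‖g x‖₊ : ℝ≥0∞) = F x - lam := by
        intro x
        simp only [hFdef]
        have key : ∀ y : ℝ, (‖y‖₊ : ℝ≥0∞) = ENNReal.ofReal |y| := fun y => Real.enorm_eq_ofReal_abs y
        rw [key, key, hlamr,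
          ← ENNReal.ofReal_sub _ hr0]
        rcases le_total r (f x) with hc | hc
        · have hhx : h x = r := by
            rw [hh]; simp only []
            rw [min_eq_left hc, max_eq_right (neg_le_self hr0)]
          have : g x = f x - r := by rw [hgdef]; simp [hhx]
          rw [this, abs_of_nonneg (sub_nonneg.mpr hc), abs_of_nonneg (hr0.trans hc)]
        · rcases le_total (f x) (-r) with hc' | hc'
          · have hhx : h x = -r := by
              rw [hh]; simp only []
              rw [min_eq_right (hc'.trans (neg_le_self hr0)), max_eq_left hc']
            have hgx : g x = f x + r := by rw [hgdef]; simp [hhx, sub_neg_eq_add]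
            have h1 : f x + r ≤ 0 := by linarith
            have h2 : f x ≤ 0 := by linarith
            rw [hgx, abs_of_nonpos h1, abs_of_nonpos h2]
            congr 1; ring
          · have hhx : h x = f x := by
              rw [hh]; simp only []
              rw [min_eq_right hc, max_eq_right hc']
            have hgx : g x = 0 := by rw [hgdef]; simp [hhx]
            rw [hgx, abs_zero, ENNReal.ofReal_zero]
            rw [ENNReal.ofReal_of_nonpos (by cases abs_le.mpr ⟨hc', hc⟩ |>.lt_or_eq <;> nlinarith [abs_le.mpr ⟨hc', hc⟩])]
      have hhbd : ∀ x, ‖h x‖ ≤ r := by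
        intro x
        rw [Real.norm_eq_abs, abs_le]
        exact ⟨le_max_left _ _, max_le (neg_le_self hr0) (min_le_left _ _)⟩
      have hhinf : eLpNorm h ⊤ μ ≤ lam := by
        rw [eLpNorm_exponent_top, hlamr]
        exact eLpNormEssSup_le_of_ae_bound (Filter.Eventually.of_forall hhbd)
      have hg1 : eLpNorm g 1 μ = ∫⁻ c in Ioi (0:ℝ), D (lam + ENNReal.ofReal c) := by
        rw [eLpNorm_one_eq_lintegral_enorm]
        calc ∫⁻ x, (‖g x‖₊ : ℝ≥0∞) ∂μ = ∫⁻ x, (F x - lam) ∂μ := lintegral_congr hgabs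
          _ = ∫⁻ c in Ioi (0:ℝ), μ {x | ENNReal.ofReal c < F x - lam} :=
              layercake μ (hFmeas.sub measurable_const)
          _ = ∫⁻ c in Ioi (0:ℝ), D (lam + ENNReal.ofReal c) := by
              refine lintegral_congr fun c => ?_
              rw [hDdef]
              congr 1
              ext x
              simp only [mem_setOf_eq]
              exact lt_tsub_iff_left
      have hDlamT : D lam ≤ T := (decRearr_le_iff μ f).mp le_rfl
      have hsplit : T * lam + eLpNorm g 1 μ ≤ ∫⁻ c in Ioi (0:ℝ), min (D (ENNReal.ofReal c)) T := by
        rw [← Ioc_union_Ioi_eq_Ioi hr0, lintegral_union measurableSet_Ioi Ioc_disjoint_Ioi_same]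
        have hpart1 : T * lam ≤ ∫⁻ c in Ioc (0:ℝ) r, min (D (ENNReal.ofReal c)) T := by
          have h1 : ∫⁻ c in Ioo (0:ℝ) r, min (D (ENNReal.ofReal c)) T
              ≤ ∫⁻ c in Ioc (0:ℝ) r, min (D (ENNReal.ofReal c)) T :=
            lintegral_mono_set Ioo_subset_Ioc_self
          have h2 : ∫⁻ c in Ioo (0:ℝ) r, min (D (ENNReal.ofReal c)) T
              = ∫⁻ _ in Ioo (0:ℝ) r, T := by
            refine setLIntegral_congr_fun measurableSet_Ioo ?_
            rintro c ⟨hc0, hcr⟩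
            refine min_eq_right (le_of_lt ?_)
            refine (lt_decRearr_iff μ f).mp ?_
            rw [← hlam, hlamr]
            exact ENNReal.ofReal_lt_ofReal_iff (hc0.trans hcr) |>.mpr hcr
          have h0 : (∫⁻ _ in Ioo (0:ℝ) r, T) = T * lam := by
            rw [setLIntegral_const, Real.volume_Ioo, sub_zero, ← hlamr]
          calc T * lam = ∫⁻ _ in Ioo (0:ℝ) r, T := h0.symm
            _ = ∫⁻ c in Ioo (0:ℝ) r, min (D (ENNReal.ofReal c)) T := h2.symm
            _ ≤ _ := h1
        have hpart2 : eLpNorm g 1 μ = ∫⁻ c in Ioi r, min (D (ENNReal.ofReal c)) T := by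
          rw [hg1]
          have h3 : ∫⁻ c in Ioi r, min (D (ENNReal.ofReal c)) T
              = ∫⁻ c in Ioi r, D (ENNReal.ofReal c) := by
            refine setLIntegral_congr_fun measurableSet_Ioi ?_
            intro c hc
            refine min_eq_left (le_trans (hDanti ?_) hDlamT)
            rw [hlamr]
            exact ENNReal.ofReal_le_ofReal (le_of_lt hc)
          rw [h3, lintegral_shift (fun c => D (ENNReal.ofReal c)) r]
          refine setLIntegral_congr_fun measurableSet_Ioi ?_
          intro c hc
          beta_reduce
          rw [ENNReal.ofReal_add (le_of_lt hc) hr0, hlamr, add_comm]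
        rw [hpart2]
        exact add_le_add hpart1 le_rfl
      calc (⨅ (g : α → ℝ) (h : α → ℝ) (_ : Measurable g) (_ : Measurable h)
          (_ : f = g + h), eLpNorm g 1 μ + ENNReal.ofReal t * eLpNorm h ⊤ μ)
          ≤ eLpNorm g 1 μ + T * eLpNorm h ⊤ μ := by
            refine iInf_le_of_le g (iInf_le_of_le h ?_)
            exact iInf_le_of_le hgmeas (iInf_le_of_le hhmeas (iInf_le_of_le hfgh le_rfl))
        _ ≤ eLpNorm g 1 μ + T * lam := add_le_add le_rfl (mul_le_mul_right hhinf T)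
        _ = T * lam + eLpNorm g 1 μ := add_comm _ _
        _ ≤ _ := hsplit
  · -- ∫ ≤ K(t,f)
    refine le_iInf fun g => le_iInf fun h => le_iInf fun hgmeas => le_iInf fun hhmeas =>
      le_iInf fun hfgh => ?_
    set M := eLpNorm h ⊤ μ with hM
    by_cases hMtop : M = ∞
    · rw [hMtop, ENNReal.mul_top hT0, add_top]
      exact le_top
    · set m := M.toReal with hm
      have hm0 : 0 ≤ m := ENNReal.toReal_nonneg
      have hMm : M = ENNReal.ofReal m := (ENNReal.ofReal_toReal hMtop).symm
      have haeh : ∀ᵐ x ∂μ, (‖h x‖₊ : ℝ≥0∞) ≤ M := by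
        rw [hM, eLpNorm_exponent_top]
        filter_upwards [ae_le_eLpNormEssSup (f := h) (μ := μ)] with x hx
        exact hx
      have hFae : ∀ᵐ x ∂μ, F x ≤ (‖g x‖₊ : ℝ≥0∞) + M := by
        filter_upwards [haeh] with x hx
        have h1 : (‖f x‖₊ : ℝ≥0∞) ≤ (‖g x‖₊ : ℝ≥0∞) + (‖h x‖₊ : ℝ≥0∞) := by
          rw [hfgh]
          exact_mod_cast nnnorm_add_le (g x) (h x)
        exact le_trans h1 (add_le_add le_rfl hx)
      have hDle : ∀ c : ℝ, m < c →
          D (ENNReal.ofReal c) ≤ μ {x | ENNReal.ofReal c - M < (‖g x‖₊ : ℝ≥0∞)} := by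
        intro c hc
        refine measure_mono_ae ?_
        filter_upwards [hFae] with x hx hxc
        have h1 : ENNReal.ofReal c < (‖g x‖₊ : ℝ≥0∞) + M := lt_of_lt_of_le hxc hx
        have hMc : M ≤ ENNReal.ofReal c := by
          rw [hMm]; exact ENNReal.ofReal_le_ofReal hc.le
        exact (ENNReal.sub_lt_iff_lt_right hMtop hMc).mpr h1
      have hsplit : ∫⁻ c in Ioi (0:ℝ), min (D (ENNReal.ofReal c)) T
          ≤ T * M + eLpNorm g 1 μ := by
        rw [← Ioc_union_Ioi_eq_Ioi hm0, lintegral_union measurableSet_Ioi Ioc_disjoint_Ioi_same]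
        refine add_le_add ?_ ?_
        · calc ∫⁻ c in Ioc (0:ℝ) m, min (D (ENNReal.ofReal c)) T
              ≤ ∫⁻ _ in Ioc (0:ℝ) m, T :=
                lintegral_mono fun c => min_le_right _ _
            _ = T * ENNReal.ofReal m := by
                rw [setLIntegral_const, Real.volume_Ioc, sub_zero]
            _ = T * M := by rw [hMm]
        · calc ∫⁻ c in Ioi m, min (D (ENNReal.ofReal c)) T
              ≤ ∫⁻ c in Ioi m, μ {x | ENNReal.ofReal c - M < (‖g x‖₊ : ℝ≥0∞)} := by
                refine lintegral_mono_ae ((ae_restrict_iff' measurableSet_Ioi).mpr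
                  (Filter.Eventually.of_forall fun c hc => ?_))
                exact le_trans (min_le_left _ _) (hDle c hc)
            _ = ∫⁻ c in Ioi (0:ℝ), μ {x | ENNReal.ofReal (c + m) - M < (‖g x‖₊ : ℝ≥0∞)} :=
                lintegral_shift _ m
            _ = ∫⁻ c in Ioi (0:ℝ), μ {x | ENNReal.ofReal c < (‖g x‖₊ : ℝ≥0∞)} := by
                refine setLIntegral_congr_fun measurableSet_Ioi ?_
                intro c hc
                beta_reduce
                congr 1
                ext x
                rw [mem_setOf_eq, mem_setOf_eq, ENNReal.ofReal_add hc.le hm0, ← hMm,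
                  ENNReal.add_sub_cancel_right hMtop]
            _ = eLpNorm g 1 μ := by
                rw [eLpNorm_one_eq_lintegral_enorm]
                exact (layercake μ hgmeas.nnnorm.coe_nnreal_ennreal).symm
      calc ∫⁻ c in Ioi (0:ℝ), min (D (ENNReal.ofReal c)) T ≤ T * M + eLpNorm g 1 μ := hsplit
        _ = eLpNorm g 1 μ + T * M := add_comm _ _
end
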